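/- Let A = diag(A₁,…,A_n) with all A_i > 0 and let q ∈ Sⁿ⁻¹ ⊂ ℝⁿ (so (q,q) = 1) and p ∈ ℝⁿ with (q,p) = 0. Then the relation p = (det A)⁻¹[(q, Aq) A q̇' − (Aq, q̇')Aq] restricted to tangent vectors q̇' with (q, q̇') = 0 is uniquely invertible, with inverse q̇' = (det A/(q,Aq)) [A⁻¹p − (p, A⁻¹q) q]. -/

import Mathlib

open Matrix

/-- The Legendre transform of the reduced Veselova Lagrangian on `T Sⁿ⁻¹` is uniquely
invertible: for `q` on the unit sphere and `p` with `(q,p)=0`, the tangent vector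
`v = (det A/(q,Aq))[A⁻¹p - (p,A⁻¹q) q]` satisfies `(q,v)=0`, the momentum relation
`p = (det A)⁻¹[(q,Aq) Av - (Aq,v) Aq]`, and it is the unique such tangent vector. -/
theorem legendre_inverse_veselova (n : ℕ) (a : Fin n → ℝ) (ha : ∀ i, 0 < a i)
    (A : Matrix (Fin n) (Fin n) ℝ) (hA : A = Matrix.diagonal a)
    (q p : Fin n → ℝ) (hq : q ⬝ᵥ q = 1) (hqp : q ⬝ᵥ p = 0) :
    q ⬝ᵥ ((A.det / (q ⬝ᵥ A.mulVec q)) • (A⁻¹.mulVec p - (p ⬝ᵥ A⁻¹.mulVec q) • q)) = 0 ∧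
    (A.det)⁻¹ •
      ((q ⬝ᵥ A.mulVec q) • A.mulVec
          ((A.det / (q ⬝ᵥ A.mulVec q)) • (A⁻¹.mulVec p - (p ⬝ᵥ A⁻¹.mulVec q) • q)) -
        (A.mulVec q ⬝ᵥ
          ((A.det / (q ⬝ᵥ A.mulVec q)) • (A⁻¹.mulVec p - (p ⬝ᵥ A⁻¹.mulVec q) • q))) •
          A.mulVec q) = p ∧
    ∀ w : Fin n → ℝ, q ⬝ᵥ w = 0 →
      (A.det)⁻¹ • ((q ⬝ᵥ A.mulVec q) • A.mulVec w - (A.mulVec q ⬝ᵥ w) • A.mulVec q) = p →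
      w = (A.det / (q ⬝ᵥ A.mulVec q)) • (A⁻¹.mulVec p - (p ⬝ᵥ A⁻¹.mulVec q) • q) := by
  have hAT : Aᵀ = A := by rw [hA, diagonal_transpose]
  have hdet : 0 < A.det := by
    rw [hA, det_diagonal]; exact Finset.prod_pos (fun i _ => ha i)
  have hd0 : A.det ≠ 0 := ne_of_gt hdet
  have hU : IsUnit A.det := isUnit_iff_ne_zero.mpr hd0
  have hAAi : A * A⁻¹ = 1 := mul_nonsing_inv A hU
  have hAiA : A⁻¹ * A = 1 := nonsing_inv_mul A hU
  have hAiT : A⁻¹ᵀ = A⁻¹ := by rw [transpose_nonsing_inv, hAT]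
  have hsym : ∀ x y : Fin n → ℝ, x ⬝ᵥ A.mulVec y = A.mulVec x ⬝ᵥ y := fun x y => by
    rw [dotProduct_mulVec, ← mulVec_transpose, hAT]
  have hsymi : ∀ x y : Fin n → ℝ, x ⬝ᵥ A⁻¹.mulVec y = A⁻¹.mulVec x ⬝ᵥ y := fun x y => by
    rw [dotProduct_mulVec, ← mulVec_transpose, hAiT]
  have hApi : ∀ x : Fin n → ℝ, A.mulVec (A⁻¹.mulVec x) = x := fun x => by
    rw [mulVec_mulVec, hAAi, one_mulVec]
  have hAip : ∀ x : Fin n → ℝ, A⁻¹.mulVec (A.mulVec x) = x := fun x => by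
    rw [mulVec_mulVec, hAiA, one_mulVec]
  have hc : 0 < q ⬝ᵥ A.mulVec q := by
    have hne : q ≠ 0 := by intro h; simp [h] at hq
    obtain ⟨i, hi⟩ := Function.ne_iff.mp hne
    have hi' : q i ≠ 0 := hi
    have he : q ⬝ᵥ A.mulVec q = ∑ j, a j * q j ^ 2 := by
      rw [hA]; simp only [dotProduct, mulVec_diagonal]
      exact Finset.sum_congr rfl fun j _ => by ring
    rw [he]
    apply Finset.sum_pos' (fun j _ => mul_nonneg (ha j).le (sq_nonneg _))
    exact ⟨i, Finset.mem_univ i, mul_pos (ha i) (by positivity)⟩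
  have hc0 : q ⬝ᵥ A.mulVec q ≠ 0 := ne_of_gt hc
  set d := A.det with hdd
  set c := q ⬝ᵥ A.mulVec q with hcc
  set lam := p ⬝ᵥ A⁻¹.mulVec q with hlam
  set v := (d / c) • (A⁻¹.mulVec p - lam • q) with hv
  -- q ⬝ᵥ A⁻¹ p = lam
  have hqip : q ⬝ᵥ A⁻¹.mulVec p = lam := by
    rw [hsymi, dotProduct_comm]
  -- Aq ⬝ᵥ A⁻¹ p = 0
  have hAqip : A.mulVec q ⬝ᵥ A⁻¹.mulVec p = 0 := by
    rw [← hsym, hApi, hqp]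
  -- Part 1
  have h1 : q ⬝ᵥ v = 0 := by
    rw [hv, dotProduct_smul, dotProduct_sub, dotProduct_smul, hq, hqip]
    simp
  -- A v
  have hAv : A.mulVec v = (d / c) • (p - lam • A.mulVec q) := by
    rw [hv, mulVec_smul, mulVec_sub, mulVec_smul, hApi]
  have hAqv : A.mulVec q ⬝ᵥ v = -(d * lam) := by
    rw [hv, dotProduct_smul, dotProduct_sub, dotProduct_smul, hAqip, dotProduct_comm]
    field_simp
    rw [← hcc]; linear_combination (-(lam * d)) * mul_inv_cancel₀ hc0
  have h2 : d⁻¹ • (c • A.mulVec v - (A.mulVec q ⬝ᵥ v) • A.mulVec q) = p := by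
    rw [hAv, hAqv, smul_smul]
    have : c * (d / c) = d := by field_simp
    rw [this]
    funext i
    simp only [Pi.smul_apply, Pi.sub_apply, smul_eq_mul]
    field_simp
    ring
  refine ⟨h1, h2, ?_⟩
  intro w hw hrel
  -- clear the d⁻¹
  have hmulw : c • A.mulVec w - (A.mulVec q ⬝ᵥ w) • A.mulVec q = d • p := by
    have := congrArg (fun x => d • x) hrel
    simpa [smul_smul, mul_inv_cancel₀ hd0] using this
  have hmulv : c • A.mulVec v - (A.mulVec q ⬝ᵥ v) • A.mulVec q = d • p := by
    have := congrArg (fun x => d • x) h2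
    simpa [smul_smul, mul_inv_cancel₀ hd0] using this
  set u := w - v with hu
  have hqu : q ⬝ᵥ u = 0 := by rw [hu, dotProduct_sub, hw, h1, sub_zero]
  have hAu : A.mulVec (c • u) = (A.mulVec q ⬝ᵥ u) • A.mulVec q := by
    have heq := hmulw.trans hmulv.symm
    rw [hu, mulVec_smul, mulVec_sub, smul_sub, dotProduct_sub, sub_smul]
    rw [sub_eq_sub_iff_sub_eq_sub] at heq
    exact heq
  have hcu : c • u = (A.mulVec q ⬝ᵥ u) • q := by
    have := congrArg A⁻¹.mulVec hAu
    rwa [hAip, mulVec_smul, hAip] at this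
  have hAqu : A.mulVec q ⬝ᵥ u = 0 := by
    have := congrArg (fun x => q ⬝ᵥ x) hcu
    simp only [dotProduct_smul, hqu, hq, smul_eq_mul, mul_zero, mul_one] at this
    exact this.symm
  have hu0 : u = 0 := by
    have := hcu
    rw [hAqu, zero_smul] at this
    exact (smul_eq_zero.mp this).resolve_left hc0
  have : w = v := by rwa [hu, sub_eq_zero] at hu0
  exact this
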